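/- Let $n \geq 3$ be odd and let $k, l$ be nonzero integers. If $\gcd(\tfrac{1}{2}n(n^2-1), k) \cdot \gcd(n, k) = \gcd(\tfrac{1}{2}n(n^2-1), l) \cdot \gcd(n, l)$, then $\gcd(\tfrac{1}{2}n(n^2-1), k) = \gcd(\tfrac{1}{2}n(n^2-1), l)$. -/
import Mathlib

theorem stmt13 (n : ℕ) (hn : 3 ≤ n) (hno : Odd n) (k l : ℤ) (hk : k ≠ 0) (hl : l ≠ 0)
    (h : Int.gcd ((n * (n ^ 2 - 1) / 2 : ℕ) : ℤ) k * Int.gcd ((n : ℕ) : ℤ) k =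
        Int.gcd ((n * (n ^ 2 - 1) / 2 : ℕ) : ℤ) l * Int.gcd ((n : ℕ) : ℤ) l) :
    Int.gcd ((n * (n ^ 2 - 1) / 2 : ℕ) : ℤ) k = Int.gcd ((n * (n ^ 2 - 1) / 2 : ℕ) : ℤ) l := by
  simp only [Int.gcd, Int.natAbs_natCast] at h ⊢
  set K := k.natAbs
  set L := l.natAbs
  set m := (n ^ 2 - 1) / 2 with hm
  -- 2 ∣ n^2 - 1
  have h2 : 2 ∣ n ^ 2 - 1 := by
    obtain ⟨j, hj⟩ := hno
    have : n ^ 2 - 1 = 2 * (2 * j ^ 2 + 2 * j) := by subst hj; ring_nf; omega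
    exact ⟨_, this⟩
  have hN : n * (n ^ 2 - 1) / 2 = n * m := by
    rw [hm, Nat.mul_div_assoc _ h2]
  -- n coprime to m
  have hcop : Nat.Coprime n m := by
    have h1 : Nat.Coprime n (n ^ 2 - 1) := by
      have hd : Nat.gcd n (n ^ 2 - 1) ∣ 1 := by
        have d1 : Nat.gcd n (n ^ 2 - 1) ∣ n ^ 2 :=
          (Nat.gcd_dvd_left _ _).trans (dvd_pow_self n (by norm_num))
        have d2 : Nat.gcd n (n ^ 2 - 1) ∣ n ^ 2 - 1 := Nat.gcd_dvd_right _ _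
        have := Nat.dvd_sub d1 d2
        have hn1 : n ^ 2 - (n ^ 2 - 1) = 1 := by
          have : 9 ≤ n ^ 2 := by nlinarith
          omega
        rwa [hn1] at this
      exact Nat.eq_one_of_dvd_one hd
    exact h1.coprime_dvd_right ⟨2, (Nat.div_mul_cancel h2).symm⟩
  have hmul : ∀ K : ℕ, Nat.gcd (n * m) K = Nat.gcd m K * Nat.gcd n K := by
    intro K
    rw [Nat.gcd_comm, Nat.Coprime.gcd_mul K hcop, Nat.gcd_comm K m, Nat.gcd_comm K n,
      Nat.mul_comm]
  rw [hN, hmul K, hmul L] at h ⊢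
  -- h : gcd m K * gcd n K * gcd n K = gcd m L * gcd n L * gcd n L
  have hmpos : 0 < m := by
    have : 9 ≤ n ^ 2 := by nlinarith
    omega
  have hgmK : Nat.Coprime (Nat.gcd m K) (Nat.gcd n L * Nat.gcd n L) :=
    ((hcop.symm.coprime_dvd_left (Nat.gcd_dvd_left m K)).coprime_dvd_right
      (Nat.gcd_dvd_left n L)).mul_right
      ((hcop.symm.coprime_dvd_left (Nat.gcd_dvd_left m K)).coprime_dvd_right
      (Nat.gcd_dvd_left n L))
  have hgmL : Nat.Coprime (Nat.gcd m L) (Nat.gcd n K * Nat.gcd n K) :=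
    ((hcop.symm.coprime_dvd_left (Nat.gcd_dvd_left m L)).coprime_dvd_right
      (Nat.gcd_dvd_left n K)).mul_right
      ((hcop.symm.coprime_dvd_left (Nat.gcd_dvd_left m L)).coprime_dvd_right
      (Nat.gcd_dvd_left n K))
  have h' : Nat.gcd m K * (Nat.gcd n K * Nat.gcd n K)
      = Nat.gcd m L * (Nat.gcd n L * Nat.gcd n L) := by ring_nf; ring_nf at h; exact h
  have hmeq : Nat.gcd m K = Nat.gcd m L := by
    have d1 : Nat.gcd m K ∣ Nat.gcd m L := by
      have : Nat.gcd m K ∣ Nat.gcd m L * (Nat.gcd n L * Nat.gcd n L) :=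
        h' ▸ Dvd.intro _ rfl
      exact (Nat.Coprime.dvd_of_dvd_mul_right hgmK this)
    have d2 : Nat.gcd m L ∣ Nat.gcd m K := by
      have : Nat.gcd m L ∣ Nat.gcd m K * (Nat.gcd n K * Nat.gcd n K) :=
        h'.symm ▸ Dvd.intro _ rfl
      exact (Nat.Coprime.dvd_of_dvd_mul_right hgmL this)
    exact Nat.dvd_antisymm d1 d2
  have hmKpos : 0 < Nat.gcd m K := Nat.gcd_pos_of_pos_left _ hmpos
  have hsq : Nat.gcd n K * Nat.gcd n K = Nat.gcd n L * Nat.gcd n L := by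
    rw [hmeq] at h'
    exact Nat.eq_of_mul_eq_mul_left (hmeq ▸ hmKpos) h'
  have hneq : Nat.gcd n K = Nat.gcd n L := Nat.mul_self_inj.mp hsq
  rw [hmeq, hneq]
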